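/- Decomposition Lemma: for every iCPL formula A there exist, for each valuation v of the Boolean variables x_a^i occurring in A (each assignment of a truth value to these variables), a Boolean formula b_v and a purely intuitionistic formula A_v (containing no Boolean variables), such that the formula A ↔ ⋁_v (b_v ∧ A_v) is valid, i.e. forced at every world w and every ω in every iCPL-structure. Moreover one may take b_v to be the conjunction of the Boolean variables true under v together with the negations of those false under v. -/

import Mathlib

noncomputable section

/-! Rational probabilities in `(0,1]`. -/
abbrev Prob : Type := {q : ℚ // 0 < q ∧ q ≤ 1}

instance : Mul Prob :=
  ⟨fun a b => ⟨a.1 * b.1, mul_pos a.2.1 b.2.1, by nlinarith [a.2.1, a.2.2, b.2.1, b.2.2]⟩⟩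

def Prob.one : Prob := ⟨1, by norm_num⟩
open MeasureTheory in
/-- The fair-coin (Bernoulli(1/2) product) measure on the Cantor space `2^ℕ`:
the pushforward of the uniform measure on `[0,1)` along the binary-digit map, so
that each cylinder `{ω | ω n = 1}` has measure `1/2` and distinct coordinates are
independent. -/
noncomputable def coinN : Measure (ℕ → Bool) :=
  Measure.map (fun (x : ℝ) (n : ℕ) => decide (Int.floor (x * 2 ^ (n + 1)) % 2 = 1))
    (volume.restrict (Set.Ico (0 : ℝ) 1))
open MeasureTheory in
/-- The fair-coin product measure on the product `(2^ℕ)^𝒜` of Cantor spaces over all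
names: the pushforward of the coin measure on `2^ℕ` along an unpairing, so that each
cylinder `{ω | ω a i = 1}` has measure `1/2` and all coordinates are independent. -/
noncomputable def coinNN : Measure (ℕ → ℕ → Bool) :=
  Measure.map (fun ω a i => ω (Nat.pair a i)) coinN
/-! ## Formulas of intuitionistic counting propositional logic `iCPL`:
`A ::= ⊤ | ⊥ | x_a^i | p | A∧A | A∨A | A→A | C^q_a A`. -/

inductive Form : Type
  | top : Form
  | bot : Form
  | bvar : ℕ → ℕ → Form       -- Boolean propositional variable `x_a^i`
  | pvar : ℕ → Form           -- intuitionistic propositional variable `p`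
  | conj : Form → Form → Form
  | disj : Form → Form → Form
  | imp : Form → Form → Form
  | cnt : Prob → ℕ → Form → Form    -- counting quantifier `C^q_a A` (binding `a`)
deriving DecidableEq

namespace Form

/-- Free names of a formula (`C^q_a` binds the name `a`). -/
def FN : Form → Finset ℕ
  | top => ∅
  | bot => ∅
  | bvar a _ => {a}
  | pvar _ => ∅
  | conj A B => FN A ∪ FN B
  | disj A B => FN A ∪ FN B
  | imp A B => FN A ∪ FN B
  | cnt _ a A => (FN A).erase a

/-- The Boolean variables `(a, i)` occurring in a formula. -/
def bvars : Form → Finset (ℕ × ℕ)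
  | top => ∅
  | bot => ∅
  | bvar a i => {(a, i)}
  | pvar _ => ∅
  | conj A B => bvars A ∪ bvars B
  | disj A B => bvars A ∪ bvars B
  | imp A B => bvars A ∪ bvars B
  | cnt _ _ A => bvars A

end Form

/-- Boolean formulas: built from `⊤, ⊥, x_a^i` using `¬, ∧, ∨` only
(negation `¬b` being `b → ⊥`). -/
inductive IsBool : Form → Prop
  | top : IsBool .top
  | bot : IsBool .bot
  | bvar (a i : ℕ) : IsBool (.bvar a i)
  | neg {b : Form} (h : IsBool b) : IsBool (.imp b .bot)
  | conj {b c : Form} (hb : IsBool b) (hc : IsBool c) : IsBool (.conj b c)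
  | disj {b c : Form} (hb : IsBool b) (hc : IsBool c) : IsBool (.disj b c)

/-- Classical evaluation of a (Boolean) formula under a valuation `ω` (on the
non-Boolean constructors the value is irrelevant and set to `false`). -/
def bevalF (ω : ℕ → ℕ → Bool) : Form → Bool
  | .top => true
  | .bot => false
  | .bvar a i => ω a i
  | .pvar _ => false
  | .conj A B => bevalF ω A && bevalF ω B
  | .disj A B => bevalF ω A || bevalF ω B
  | .imp A B => !bevalF ω A || bevalF ω B
  | .cnt _ _ _ => false

/-- The measure `μ(b)` of the set of valuations satisfying a Boolean formula. -/
noncomputable def muF (b : Form) : ENNReal :=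
  coinNN {ω : ℕ → ℕ → Bool | bevalF ω b = true}

/-! ## Kripke-style `iCPL`-structures and forcing.

Environments are represented as total maps `ω : 𝒜 → 2^ℕ` assigning an element of
the Cantor space to every name (forcing of a formula `A` with `FN(A) ⊆ X` only
depends on the restriction of `ω` to `X`, so this is the forcing relation
`w, ω ⊩^X_M A` for every sufficiently large finite set `X` of names). -/

/-- An `iCPL`-structure `(W, ≼, i)`: a countable set of worlds, preordered, with an
interpretation of the intuitionistic propositional variables as upper subsets. -/
structure ICPLStructure : Type 1 where
  W : Type
  countable : Countable W
  le : W → W → Prop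
  le_refl : ∀ w, le w w
  le_trans : ∀ u v w, le u v → le v w → le u w
  I : ℕ → Set W
  I_up : ∀ p u v, le u v → u ∈ I p → v ∈ I p

/-- `ω + ω'`: update of the environment `ω` at the name `a` by `ω' ∈ 2^ℕ`. -/
def updName (ω : ℕ → ℕ → Bool) (a : ℕ) (ω' : ℕ → Bool) : ℕ → ℕ → Bool :=
  fun b => if b = a then ω' else ω b

/-- The forcing relation `w, ω ⊩_M A`. -/
def Force (M : ICPLStructure) : Form → M.W → (ℕ → ℕ → Bool) → Prop
  | .top, _, _ => True
  | .bot, _, _ => False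
  | .bvar a i, _, ω => ω a i = true
  | .pvar p, w, _ => w ∈ M.I p
  | .conj A B, w, ω => Force M A w ω ∧ Force M B w ω
  | .disj A B, w, ω => Force M A w ω ∨ Force M B w ω
  | .imp A B, w, ω => ∀ w', M.le w w' → Force M A w' ω → Force M B w' ω
  | .cnt q a A, w, ω =>
      ENNReal.ofReal ((q : ℚ) : ℝ) ≤ coinN {ω' : ℕ → Bool | Force M A w (updName ω a ω')}

/-- Purely intuitionistic formulas: those containing no Boolean variable `x_a^i`. -/
def PurelyIntuitionistic : Form → Prop
  | .top => True
  | .bot => True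
  | .bvar _ _ => False
  | .pvar _ => True
  | .conj A B => PurelyIntuitionistic A ∧ PurelyIntuitionistic B
  | .disj A B => PurelyIntuitionistic A ∧ PurelyIntuitionistic B
  | .imp A B => PurelyIntuitionistic A ∧ PurelyIntuitionistic B
  | .cnt _ _ A => PurelyIntuitionistic A

/-- Finite disjunctions and conjunctions of formulas. -/
def bigOrF (l : List Form) : Form := l.foldr Form.disj Form.bot
def bigAndF (l : List Form) : Form := l.foldr Form.conj Form.top

/-- `A ↔ B` as a formula. -/
def iffF (A B : Form) : Form := .conj (.imp A B) (.imp B A)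

/-- A formula is valid when it is forced at every world and environment of every
`iCPL`-structure. -/
def Valid (A : Form) : Prop :=
  ∀ (M : ICPLStructure) (w : M.W) (ω : ℕ → ℕ → Bool), Force M A w ω

/-- The Boolean formula `b_v` characterizing a valuation `v` of the Boolean
variables of `A`: the conjunction of the variables true under `v` and of the
negations (`¬x = x → ⊥`) of those false under `v`. -/
def thOf (A : Form) (v : {p // p ∈ A.bvars} → Bool) : Form :=
  bigAndF ((A.bvars.attach.toList).map
    (fun p => if v p then Form.bvar p.1.1 p.1.2 else .imp (.bvar p.1.1 p.1.2) .bot))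


open MeasureTheory

lemma dig_measurable : Measurable (fun (x : ℝ) (n : ℕ) => decide (Int.floor (x * 2 ^ (n + 1)) % 2 = 1)) := by
  refine measurable_pi_lambda _ (fun n => ?_)
  have h1 : Measurable fun x : ℝ => ⌊x * 2 ^ (n+1)⌋ :=
    Int.measurable_floor.comp (measurable_id.mul_const ((2:ℝ) ^ (n+1)))
  exact (measurable_from_top (f := fun z : ℤ => decide (z % 2 = 1))).comp h1

lemma floor_half (y : ℝ) : ⌊y / 2⌋ = ⌊y⌋ / 2 := by
  have h := Int.floor_le y
  have h2 := Int.lt_floor_add_one y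
  have hr : ⌊y⌋ % 2 = 0 ∨ ⌊y⌋ % 2 = 1 := Int.emod_two_eq _
  have hm : ⌊y⌋ = 2 * (⌊y⌋ / 2) + ⌊y⌋ % 2 := (Int.mul_ediv_add_emod _ _).symm
  rw [Int.floor_eq_iff]
  constructor
  · have h3 : (2 * (⌊y⌋ / 2) : ℤ) ≤ ⌊y⌋ := by omega
    have h4 : ((2 * (⌊y⌋ / 2) : ℤ) : ℝ) ≤ (⌊y⌋ : ℝ) := by exact_mod_cast h3
    push_cast at h4
    linarith
  · have h3 : (⌊y⌋ + 1 : ℤ) ≤ 2 * (⌊y⌋ / 2) + 2 := by omega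
    have h4 : ((⌊y⌋ + 1 : ℤ) : ℝ) ≤ ((2 * (⌊y⌋ / 2) + 2 : ℤ) : ℝ) := by exact_mod_cast h3
    push_cast at h4
    linarith

/-- number with binary digits `w 0 ... w (N-1)` (w 0 most significant). -/
def numOf (w : ℕ → Bool) : ℕ → ℕ
  | 0 => 0
  | n + 1 => 2 * numOf w n + cond (w n) 1 0

lemma numOf_lt (w : ℕ → Bool) (N : ℕ) : numOf w N < 2 ^ N := by
  induction N with
  | zero => simp [numOf]
  | succ n ih => cases h : w n <;> simp [numOf, h, pow_succ] <;> omega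

lemma digits_iff_floor (w : ℕ → Bool) (N : ℕ) (x : ℝ) (hx : x ∈ Set.Ico (0:ℝ) 1) :
    (∀ i < N, decide (⌊x * 2 ^ (i + 1)⌋ % 2 = 1) = w i) ↔ ⌊x * 2 ^ N⌋ = (numOf w N : ℤ) := by
  induction N with
  | zero =>
    simp only [numOf, Nat.cast_zero, pow_zero, mul_one]
    rw [Int.floor_eq_zero_iff]
    simpa using hx
  | succ n ih =>
    have hkey : ⌊x * 2 ^ n⌋ = ⌊x * 2 ^ (n+1)⌋ / 2 := by
      rw [← floor_half]
      congr 1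
      ring
    constructor
    · intro h
      have h1 : ⌊x * 2 ^ n⌋ = (numOf w n : ℤ) := (ih.mp (fun i hi => h i (by omega)))
      have h2 := h n (by omega)
      rw [hkey] at h1
      have hr : ⌊x * 2 ^ (n+1)⌋ % 2 = 0 ∨ ⌊x * 2 ^ (n+1)⌋ % 2 = 1 := Int.emod_two_eq _
      cases hw : w n <;> rw [hw] at h2 <;> simp at h2 <;> simp [numOf, hw] <;> push_cast <;> omega
    · intro h
      have h2 : ⌊x * 2 ^ (n+1)⌋ % 2 = cond (w n) 1 0 := by
        rw [h]; cases hw : w n <;> simp [numOf, hw] <;> push_cast <;> omega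
      have h1 : ⌊x * 2 ^ n⌋ = (numOf w n : ℤ) := by
        rw [hkey, h]; cases hw : w n <;> simp [numOf, hw] <;> push_cast <;> omega
      intro i hi
      rcases Nat.lt_succ_iff_lt_or_eq.mp hi with hi' | rfl
      · exact ih.mpr h1 i hi'
      · rw [h2]; cases w i <;> simp

def cylSet (N : ℕ) (g : Fin N → Bool) : Set (ℕ → Bool) := {ω | ∀ i : Fin N, ω i = g i}

lemma cylSet_measurable (N : ℕ) (g : Fin N → Bool) : MeasurableSet (cylSet N g) := by
  have : cylSet N g = ⋂ i : Fin N, (fun ω : ℕ → Bool => ω i) ⁻¹' {g i} := by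
    ext ω; simp [cylSet]
  rw [this]
  exact MeasurableSet.iInter fun i => (measurable_pi_apply (i : ℕ)) (by trivial)

/-- extend a finite word by `false`. -/
def extW (N : ℕ) (g : Fin N → Bool) : ℕ → Bool := fun i => if h : i < N then g ⟨i, h⟩ else false

lemma coinN_cylSet (N : ℕ) (g : Fin N → Bool) :
    coinN (cylSet N g) = ((2 : ENNReal) ^ N)⁻¹ := by
  rw [coinN, Measure.map_apply dig_measurable (cylSet_measurable N g),
    Measure.restrict_apply (dig_measurable (cylSet_measurable N g))]
  set k : ℕ := numOf (extW N g) N with hk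
  have hklt : k < 2 ^ N := numOf_lt _ _
  have hset : (fun (x : ℝ) (n : ℕ) => decide (⌊x * 2 ^ (n + 1)⌋ % 2 = 1)) ⁻¹' cylSet N g ∩
      Set.Ico (0:ℝ) 1 = Set.Ico ((k : ℝ) / 2 ^ N) ((k + 1 : ℝ) / 2 ^ N) := by
    ext x
    simp only [Set.mem_inter_iff, Set.mem_preimage, cylSet, Set.mem_setOf_eq, Set.mem_Ico]
    constructor
    · rintro ⟨hdig, hx⟩
      have : ⌊x * 2 ^ N⌋ = (k : ℤ) := by
        rw [← digits_iff_floor (extW N g) N x hx]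
        intro i hi
        simpa [extW, hi] using hdig ⟨i, hi⟩
      have h1 : ((k : ℤ) : ℝ) ≤ x * 2 ^ N := this ▸ Int.floor_le _
      have h2 : x * 2 ^ N < (k : ℤ) + 1 := this ▸ Int.lt_floor_add_one _
      have hp : (0:ℝ) < 2 ^ N := by positivity
      constructor
      · rw [div_le_iff₀ hp]; exact_mod_cast h1
      · rw [lt_div_iff₀ hp]; push_cast at h2 ⊢; linarith
    · rintro ⟨h1, h2⟩
      have hp : (0:ℝ) < 2 ^ N := by positivity
      have hx : x ∈ Set.Ico (0:ℝ) 1 := by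
        constructor
        · have : (0:ℝ) ≤ (k : ℝ) / 2 ^ N := by positivity
          linarith
        · have hk1 : ((k:ℝ) + 1) / 2 ^ N ≤ 1 := by
            rw [div_le_one hp]
            exact_mod_cast hklt
          linarith
      refine ⟨?_, hx⟩
      have hfl : ⌊x * 2 ^ N⌋ = (k : ℤ) := by
        rw [Int.floor_eq_iff]
        rw [div_le_iff₀ hp] at h1
        rw [lt_div_iff₀ hp] at h2
        constructor
        · exact_mod_cast h1
        · push_cast at h2 ⊢; linarith
      have := (digits_iff_floor (extW N g) N x hx).mpr hfl
      intro i
      simpa [extW, i.2] using this i i.2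
  rw [hset]
  rw [Real.volume_Ico]
  have : ((k:ℝ) + 1) / 2 ^ N - (k:ℝ) / 2 ^ N = (2 ^ N)⁻¹ := by
    field_simp
    ring
  rw [this, ENNReal.ofReal_inv_of_pos (by positivity), ENNReal.ofReal_pow (by norm_num)]
  norm_num

lemma cnt_key (qq : ℚ) (hq0 : 0 ≤ qq) (N : ℕ) (S : Set (ℕ → Bool)) (D : (Fin N → Bool) → Prop)
    (h : ∀ ω', ω' ∈ S ↔ D (fun i : Fin N => ω' i)) :
    (ENNReal.ofReal ((qq : ℚ) : ℝ) ≤ coinN S) ↔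
      ∃ T : Finset (Fin N → Bool), qq * 2 ^ N ≤ (T.card : ℚ) ∧ ∀ g ∈ T, D g := by
  classical
  have hset : S = ⋃ g ∈ Finset.univ.filter D, cylSet N g := by
    ext ω'
    simp only [Set.mem_iUnion, Finset.mem_filter, Finset.mem_univ, true_and, h ω']
    constructor
    · intro hd
      exact ⟨fun i : Fin N => ω' i, hd, fun i => rfl⟩
    · rintro ⟨g, hg, hcyl⟩
      have : (fun i : Fin N => ω' i) = g := funext fun i => hcyl i
      rw [this]; exact hg
  have hmeas : coinN S = ((Finset.univ.filter D).card : ENNReal) * ((2 : ENNReal) ^ N)⁻¹ := by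
    rw [hset, measure_biUnion_finset ?_ (fun g _ => cylSet_measurable N g)]
    · simp only [coinN_cylSet, Finset.sum_const, nsmul_eq_mul]
    · intro g hg g' hg' hne
      refine Set.disjoint_left.mpr fun ω' h1 h2 => hne ?_
      exact funext fun i => (h1 i).symm.trans (h2 i)
  set G := Finset.univ.filter D with hG
  have h2 : ((2:ENNReal)^N) ≠ 0 := pow_ne_zero _ two_ne_zero
  have h2t : ((2:ENNReal)^N) ≠ ⊤ := ENNReal.pow_ne_top (by simp)
  have key : (ENNReal.ofReal ((qq : ℚ) : ℝ) ≤ coinN S) ↔ qq * 2 ^ N ≤ (G.card : ℚ) := by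
    rw [hmeas, ← div_eq_mul_inv, ENNReal.le_div_iff_mul_le (Or.inl h2) (Or.inl h2t)]
    have e1 : (2:ENNReal)^N = ENNReal.ofReal ((2:ℝ)^N) := by
      rw [ENNReal.ofReal_pow (by norm_num)]; norm_num
    have e2 : (G.card : ENNReal) = ENNReal.ofReal ((G.card : ℕ) : ℝ) := by
      simp
    rw [e1, e2, ← ENNReal.ofReal_mul (by positivity),
      ENNReal.ofReal_le_ofReal_iff (by positivity)]
    constructor
    · intro hx; exact_mod_cast hx
    · intro hx; exact_mod_cast hx
  rw [key]
  constructor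
  · intro hx
    exact ⟨G, hx, fun g hg => (Finset.mem_filter.mp hg).2⟩
  · rintro ⟨T, hT, hall⟩
    have hsub : T ⊆ G := fun g hg => Finset.mem_filter.mpr ⟨Finset.mem_univ g, hall g hg⟩
    have := Finset.card_le_card hsub
    calc qq * 2 ^ N ≤ (T.card : ℚ) := hT
      _ ≤ (G.card : ℚ) := by exact_mod_cast this


section Logic

/-- A bound strictly above all second indices of Boolean variables of `A`. -/
def Nix (A : Form) : ℕ := (A.bvars.sup Prod.snd) + 1

lemma snd_lt_Nix {A : Form} {p : ℕ × ℕ} (hp : p ∈ A.bvars) : p.2 < Nix A :=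
  Nat.lt_succ_of_le (Finset.le_sup (f := Prod.snd) hp)

/-- Substitution of the Boolean variables of a formula according to a valuation,
turning it into a purely intuitionistic formula; the counting quantifier is replaced
by the disjunction, over the sufficiently large sets `T` of words for the bound name,
of the conjunctions of the corresponding substitution instances. -/
def subst : Form → (ℕ → ℕ → Bool) → Form
  | .top, _ => .top
  | .bot, _ => .bot
  | .bvar a i, ρ => if ρ a i then .top else .bot
  | .pvar p, _ => .pvar p
  | .conj A B, ρ => .conj (subst A ρ) (subst B ρ)
  | .disj A B, ρ => .disj (subst A ρ) (subst B ρ)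
  | .imp A B, ρ => .imp (subst A ρ) (subst B ρ)
  | .cnt q a A, ρ =>
      bigOrF ((((Finset.univ : Finset (Finset (Fin (Nix A) → Bool))).filter
          (fun T => q.1 * 2 ^ (Nix A) ≤ (T.card : ℚ))).toList).map
        (fun T => bigAndF (T.toList.map
          (fun g => subst A (updName ρ a (extW (Nix A) g))))))

lemma force_mono (M : ICPLStructure) (A : Form) :
    ∀ w w' ω, M.le w w' → Force M A w ω → Force M A w' ω := by
  induction A with
  | top => intro _ _ _ _ _; trivial
  | bot => intro _ _ _ _ hf; exact hf
  | bvar a i => intro _ _ _ _ hf; exact hf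
  | pvar p => intro w w' ω h hf; exact M.I_up p w w' h hf
  | conj A B ihA ihB =>
      rintro w w' ω h ⟨h1, h2⟩; exact ⟨ihA _ _ _ h h1, ihB _ _ _ h h2⟩
  | disj A B ihA ihB =>
      rintro w w' ω h (h1 | h2)
      · exact Or.inl (ihA _ _ _ h h1)
      · exact Or.inr (ihB _ _ _ h h2)
  | imp A B ihA ihB =>
      intro w w' ω h hf w'' h2 ha
      exact hf w'' (M.le_trans _ _ _ h h2) ha
  | cnt q a A ih =>
      intro w w' ω h hf
      refine le_trans hf (measure_mono ?_)
      intro ω' hmem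
      exact ih _ _ _ h hmem

lemma force_pi (M : ICPLStructure) (A : Form) (h : PurelyIntuitionistic A) :
    ∀ w ω ω', Force M A w ω → Force M A w ω' := by
  induction A with
  | top => intro _ _ _ _; trivial
  | bot => intro _ _ _ hf; exact hf
  | bvar a i => exact absurd h not_false
  | pvar p => intro _ _ _ hf; exact hf
  | conj A B ihA ihB =>
      rintro w ω ω' ⟨h1, h2⟩; exact ⟨ihA h.1 _ _ _ h1, ihB h.2 _ _ _ h2⟩
  | disj A B ihA ihB =>
      rintro w ω ω' (h1 | h2)
      · exact Or.inl (ihA h.1 _ _ _ h1)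
      · exact Or.inr (ihB h.2 _ _ _ h2)
  | imp A B ihA ihB =>
      intro w ω ω' hf w'' hle ha
      exact ihB h.2 _ _ _ (hf w'' hle (ihA h.1 _ _ _ ha))
  | cnt q a A ih =>
      intro w ω ω' hf
      have heq : {ω₁ : ℕ → Bool | Force M A w (updName ω' a ω₁)} =
          {ω₁ : ℕ → Bool | Force M A w (updName ω a ω₁)} := by
        ext ω₁
        exact ⟨fun hx => ih h _ _ _ hx, fun hx => ih h _ _ _ hx⟩
      show ENNReal.ofReal _ ≤ coinN {ω₁ : ℕ → Bool | Force M A w (updName ω' a ω₁)}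
      rw [heq]
      exact hf

lemma force_bigOr (M : ICPLStructure) (l : List Form) (w : M.W) (ω : ℕ → ℕ → Bool) :
    Force M (bigOrF l) w ω ↔ ∃ B ∈ l, Force M B w ω := by
  induction l with
  | nil => simp [bigOrF, Force]
  | cons B l ih =>
      show Force M B w ω ∨ Force M (bigOrF l) w ω ↔ _
      rw [ih]
      simp

lemma force_bigAnd (M : ICPLStructure) (l : List Form) (w : M.W) (ω : ℕ → ℕ → Bool) :
    Force M (bigAndF l) w ω ↔ ∀ B ∈ l, Force M B w ω := by
  induction l with
  | nil => simp [bigAndF, Force]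
  | cons B l ih =>
      show Force M B w ω ∧ Force M (bigAndF l) w ω ↔ _
      rw [ih]
      simp

lemma pi_bigOr {l : List Form} (h : ∀ B ∈ l, PurelyIntuitionistic B) :
    PurelyIntuitionistic (bigOrF l) := by
  induction l with
  | nil => trivial
  | cons B l ih =>
      exact ⟨h B (by simp), ih fun C hC => h C (by simp [hC])⟩

lemma pi_bigAnd {l : List Form} (h : ∀ B ∈ l, PurelyIntuitionistic B) :
    PurelyIntuitionistic (bigAndF l) := by
  induction l with
  | nil => trivial
  | cons B l ih =>
      exact ⟨h B (by simp), ih fun C hC => h C (by simp [hC])⟩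

lemma subst_pi (A : Form) : ∀ ρ, PurelyIntuitionistic (subst A ρ) := by
  induction A with
  | top => intro _; trivial
  | bot => intro _; trivial
  | bvar a i =>
      intro ρ
      by_cases h : ρ a i = true <;> simp [subst, h] <;> trivial
  | pvar p => intro _; trivial
  | conj A B ihA ihB => exact fun ρ => ⟨ihA ρ, ihB ρ⟩
  | disj A B ihA ihB => exact fun ρ => ⟨ihA ρ, ihB ρ⟩
  | imp A B ihA ihB => exact fun ρ => ⟨ihA ρ, ihB ρ⟩
  | cnt q a A ih =>
      intro ρ
      refine pi_bigOr fun B hB => ?_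
      simp only [List.mem_map] at hB
      obtain ⟨T, _, rfl⟩ := hB
      refine pi_bigAnd fun C hC => ?_
      simp only [List.mem_map] at hC
      obtain ⟨g, _, rfl⟩ := hC
      exact ih _

lemma subst_congr (A : Form) : ∀ ρ ρ',
    (∀ p ∈ A.bvars, ρ p.1 p.2 = ρ' p.1 p.2) → subst A ρ = subst A ρ' := by
  induction A with
  | top => intro _ _ _; rfl
  | bot => intro _ _ _; rfl
  | bvar a i =>
      intro ρ ρ' h
      have := h (a, i) (by simp [Form.bvars])
      simp only [subst, this]
  | pvar p => intro _ _ _; rfl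
  | conj A B ihA ihB =>
      intro ρ ρ' h
      simp only [subst]
      rw [ihA _ _ fun p hp => h p (by simp [Form.bvars, hp]),
        ihB _ _ fun p hp => h p (by simp [Form.bvars, hp])]
  | disj A B ihA ihB =>
      intro ρ ρ' h
      simp only [subst]
      rw [ihA _ _ fun p hp => h p (by simp [Form.bvars, hp]),
        ihB _ _ fun p hp => h p (by simp [Form.bvars, hp])]
  | imp A B ihA ihB =>
      intro ρ ρ' h
      simp only [subst]
      rw [ihA _ _ fun p hp => h p (by simp [Form.bvars, hp]),
        ihB _ _ fun p hp => h p (by simp [Form.bvars, hp])]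
  | cnt q a A ih =>
      intro ρ ρ' h
      simp only [subst]
      congr 1
      refine List.map_congr_left fun T _ => ?_
      congr 1
      refine List.map_congr_left fun g _ => ?_
      refine ih _ _ fun p hp => ?_
      simp only [updName]
      by_cases hpa : p.1 = a
      · simp [hpa]
      · simp only [if_neg hpa]
        exact h p hp

lemma subst_force (M : ICPLStructure) (A : Form) :
    ∀ w ω, Force M A w ω ↔ Force M (subst A ω) w ω := by
  induction A with
  | top => intro _ _; simp [subst]
  | bot => intro _ _; simp [subst]
  | bvar a i =>
      intro w ω
      by_cases h : ω a i = true <;> simp [subst, h, Force]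
  | pvar p => intro _ _; simp [subst]
  | conj A B ihA ihB =>
      intro w ω
      show Force M A w ω ∧ Force M B w ω ↔ Force M (subst A ω) w ω ∧ Force M (subst B ω) w ω
      rw [ihA, ihB]
  | disj A B ihA ihB =>
      intro w ω
      show Force M A w ω ∨ Force M B w ω ↔ Force M (subst A ω) w ω ∨ Force M (subst B ω) w ω
      rw [ihA, ihB]
  | imp A B ihA ihB =>
      intro w ω
      show (∀ w', M.le w w' → Force M A w' ω → Force M B w' ω) ↔
        (∀ w', M.le w w' → Force M (subst A ω) w' ω → Force M (subst B ω) w' ω)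
      constructor
      · intro h w' hle ha
        exact (ihB w' ω).mp (h w' hle ((ihA w' ω).mpr ha))
      · intro h w' hle ha
        exact (ihB w' ω).mpr (h w' hle ((ihA w' ω).mp ha))
  | cnt q a A ih =>
      intro w ω
      have hq0 : (0:ℚ) ≤ q.1 := le_of_lt q.2.1
      have hiff : ∀ ω' : ℕ → Bool,
          ω' ∈ {ω' : ℕ → Bool | Force M A w (updName ω a ω')} ↔
          (fun g : Fin (Nix A) → Bool =>
            Force M (subst A (updName ω a (extW (Nix A) g))) w ω)
            (fun i : Fin (Nix A) => ω' i) := by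
        intro ω'
        simp only [Set.mem_setOf_eq]
        rw [ih w (updName ω a ω')]
        have hcongr : subst A (updName ω a ω') =
            subst A (updName ω a (extW (Nix A) (fun i : Fin (Nix A) => ω' i))) := by
          refine subst_congr A _ _ fun p hp => ?_
          simp only [updName]
          by_cases hpa : p.1 = a
          · simp [hpa, extW, snd_lt_Nix hp]
          · simp [if_neg hpa]
        rw [hcongr]
        exact ⟨fun hf => force_pi M _ (subst_pi A _) w _ ω hf,
          fun hf => force_pi M _ (subst_pi A _) w ω _ hf⟩
      have hkey := cnt_key q.1 hq0 (Nix A)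
        {ω' : ℕ → Bool | Force M A w (updName ω a ω')}
        (fun g : Fin (Nix A) → Bool =>
          Force M (subst A (updName ω a (extW (Nix A) g))) w ω) hiff
      show ENNReal.ofReal _ ≤ coinN _ ↔ Force M (subst (.cnt q a A) ω) w ω
      rw [hkey]
      simp only [subst]
      rw [force_bigOr]
      constructor
      · rintro ⟨T, hT, hall⟩
        refine ⟨bigAndF (T.toList.map
            (fun g => subst A (updName ω a (extW (Nix A) g)))), ?_, ?_⟩
        · simp only [List.mem_map, Finset.mem_toList, Finset.mem_filter,
            Finset.mem_univ, true_and]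
          exact ⟨T, hT, rfl⟩
        · rw [force_bigAnd]
          rintro B hB
          simp only [List.mem_map, Finset.mem_toList] at hB
          obtain ⟨g, hg, rfl⟩ := hB
          exact hall g hg
      · rintro ⟨B, hB, hf⟩
        simp only [List.mem_map, Finset.mem_toList, Finset.mem_filter,
          Finset.mem_univ, true_and] at hB
        obtain ⟨T, hT, rfl⟩ := hB
        refine ⟨T, hT, fun g hg => ?_⟩
        rw [force_bigAnd] at hf
        exact hf _ (List.mem_map_of_mem (Finset.mem_toList.mpr hg))

lemma force_thOf (M : ICPLStructure) (A : Form) (v : {p // p ∈ A.bvars} → Bool)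
    (w : M.W) (ω : ℕ → ℕ → Bool) :
    Force M (thOf A v) w ω ↔ ∀ p : {p // p ∈ A.bvars}, ω p.1.1 p.1.2 = v p := by
  rw [thOf, force_bigAnd]
  constructor
  · intro h p
    have hp := h _ (List.mem_map_of_mem (Finset.mem_toList.mpr (Finset.mem_attach _ p)))
    cases hv : v p <;> rw [hv] at hp
    · simp only [Bool.false_eq_true, if_false] at hp
      have h2 : Force M (.bvar p.1.1 p.1.2) w ω → Force M .bot w ω := hp w (M.le_refl w)
      cases hωp : ω p.1.1 p.1.2
      · rfl
      · exact (h2 hωp).elim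
    · simp only [if_true] at hp
      exact hp
  · intro h B hB
    simp only [List.mem_map, Finset.mem_toList] at hB
    obtain ⟨p, _, rfl⟩ := hB
    cases hv : v p
    · simp only [hv, Bool.false_eq_true, if_false]
      intro w' _ hb
      have hb' : ω p.1.1 p.1.2 = true := hb
      rw [h p, hv] at hb'
      exact Bool.false_ne_true hb'
    · simp only [hv, if_true]
      show ω p.1.1 p.1.2 = true
      rw [h p, hv]

end Logic

/-- **Decomposition Lemma.**  For every `iCPL` formula `A` there
exist, for each valuation `v` of the Boolean variables occurring in `A`, purely
intuitionistic formulas `A_v` such that `A ↔ ⋁_v (b_v ∧ A_v)` is valid, where one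
may take for `b_v` the conjunction of the Boolean variables true under `v` together
with the negations of those false under `v`. -/
theorem decomposition_lemma (A : Form) :
    ∃ F : ({p // p ∈ A.bvars} → Bool) → Form,
      (∀ v, PurelyIntuitionistic (F v)) ∧
      Valid (iffF A (bigOrF
        ((Finset.univ : Finset ({p // p ∈ A.bvars} → Bool)).toList.map
          (fun v => Form.conj (thOf A v) (F v))))) := by
  classical
  refine ⟨fun v => subst A (fun b i => if h : (b, i) ∈ A.bvars then v ⟨(b, i), h⟩ else false),
    fun v => subst_pi A _, ?_⟩
  intro M w ω
  have key : ∀ (w : M.W) (ω : ℕ → ℕ → Bool), Force M A w ω ↔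
      Force M (bigOrF
        ((Finset.univ : Finset ({p // p ∈ A.bvars} → Bool)).toList.map
          (fun v => Form.conj (thOf A v)
            (subst A (fun b i => if h : (b, i) ∈ A.bvars then v ⟨(b, i), h⟩ else false))))) w ω := by
    intro w ω
    rw [force_bigOr]
    constructor
    · intro h
      set v₀ : {p // p ∈ A.bvars} → Bool := fun p => ω p.1.1 p.1.2 with hv₀
      refine ⟨_, List.mem_map_of_mem (Finset.mem_toList.mpr (Finset.mem_univ v₀)), ?_⟩
      refine ⟨(force_thOf M A v₀ w ω).mpr (fun p => rfl), ?_⟩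
      have h1 := (subst_force M A w ω).mp h
      have h2 : subst A ω =
          subst A (fun b i => if h : (b, i) ∈ A.bvars then v₀ ⟨(b, i), h⟩ else false) := by
        refine subst_congr A _ _ fun p hp => ?_
        obtain ⟨b, i⟩ := p
        simp [hp, hv₀]
      rwa [h2] at h1
    · rintro ⟨B, hB, hf⟩
      simp only [List.mem_map, Finset.mem_toList] at hB
      obtain ⟨v, _, rfl⟩ := hB
      obtain ⟨hth, hsub⟩ := hf
      have hv : ∀ p : {p // p ∈ A.bvars}, ω p.1.1 p.1.2 = v p := (force_thOf M A v w ω).mp hth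
      have h2 : subst A (fun b i => if h : (b, i) ∈ A.bvars then v ⟨(b, i), h⟩ else false) =
          subst A ω := by
        refine subst_congr A _ _ fun p hp => ?_
        obtain ⟨b, i⟩ := p
        simp [hp, hv ⟨(b, i), hp⟩]
      rw [h2] at hsub
      exact (subst_force M A w ω).mpr hsub
  exact ⟨fun w' _ h => (key w' ω).mp h, fun w' _ h => (key w' ω).mpr h⟩
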